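/- arXiv:2503.18131 — 3 statements merged into one kernel-verified Lean document; each statement's English description precedes it below -/
import Mathlib

section
/- For α ∈ (0,1), the function K_α(y) = ∫_{-π}^{π} e^{-2yt}(π - |t|)^{α} dt satisfies the two-sided asymptotic K_α(y) ≍ e^{2π|y|}/|y|^{α+1} as |y| → ∞; i.e., there exist constants c, C > 0 and Y > 0 such that c·e^{2π|y|}/|y|^{α+1} ≤ K_α(y) ≤ C·e^{2π|y|}/|y|^{α+1} for all |y| ≥ Y. -/
open Real MeasureTheory intervalIntegral

private lemma rpow_mul_exp_le_one {α : ℝ} (hα0 : 0 < α) (hα1 : α ≤ 1) {u : ℝ} (hu : 0 ≤ u) :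
    u ^ α * Real.exp (-u) ≤ 1 := by
  rcases le_or_gt u 1 with h | h
  · have h1 : u ^ α ≤ 1 := Real.rpow_le_one hu h hα0.le
    have h2 : Real.exp (-u) ≤ 1 := Real.exp_le_one_iff.mpr (by linarith)
    nlinarith [Real.exp_pos (-u), Real.rpow_nonneg hu α]
  · have h1 : u ^ α ≤ u := by
      calc u ^ α ≤ u ^ (1:ℝ) := Real.rpow_le_rpow_of_exponent_le h.le hα1
        _ = u := Real.rpow_one u
    have h2 : u ≤ Real.exp u := by linarith [Real.add_one_le_exp u]
    have h4 : u * Real.exp (-u) ≤ 1 := by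
      rw [Real.exp_neg u, ← div_eq_mul_inv, div_le_one (Real.exp_pos u)]; exact h2
    nlinarith [Real.exp_pos (-u)]

private lemma cont_integrand {α : ℝ} (hα0 : 0 ≤ α) (y : ℝ) :
    Continuous (fun t : ℝ => Real.exp (-2*y*t) * (π - |t|) ^ α) := by
  apply Continuous.mul
  · exact Real.continuous_exp.comp (by fun_prop)
  · exact (Real.continuous_rpow_const hα0).comp (continuous_const.sub continuous_abs)

private lemma main_pos {α : ℝ} (hα : α ∈ Set.Ioo (0:ℝ) 1) {y : ℝ} (hy : 1 ≤ y) :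
    Real.exp (-1)/8 * (Real.exp (2*π*y) / y ^ (α+1)) ≤
      (∫ t in (-π)..π, Real.exp (-2*y*t) * (π - |t|) ^ α) ∧
    (∫ t in (-π)..π, Real.exp (-2*y*t) * (π - |t|) ^ α) ≤
      2 * (Real.exp (2*π*y) / y ^ (α+1)) := by
  obtain ⟨hα0, hα1⟩ := hα
  have hy0 : (0:ℝ) < y := lt_of_lt_of_le one_pos hy
  have hπ : (0:ℝ) < π := Real.pi_pos
  have hπ1 : (1:ℝ) ≤ π := by linarith [Real.pi_gt_three]
  have hyp : (0:ℝ) < y ^ (α+1) := Real.rpow_pos_of_pos hy0 _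
  set f : ℝ → ℝ := fun t => Real.exp (-2*y*t) * (π - |t|) ^ α with hf
  have hcont : Continuous f := cont_integrand hα0.le y
  have hsplit : (∫ t in (-π)..π, f t) = (∫ t in (-π)..(0:ℝ), f t) + ∫ t in (0:ℝ)..π, f t :=
    (integral_add_adjacent_intervals (hcont.intervalIntegrable _ _)
      (hcont.intervalIntegrable _ _)).symm
  set J : ℝ := ∫ s in (0:ℝ)..π, Real.exp (-2*y*s) * s ^ α with hJ
  have hcont2 : Continuous fun s : ℝ => Real.exp (-2*y*s) * s ^ α := by
    apply Continuous.mul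
    · exact Real.continuous_exp.comp (by fun_prop)
    · exact Real.continuous_rpow_const hα0.le
  -- left piece equals exp(2πy) * J
  have hA : (∫ t in (-π)..(0:ℝ), f t) = Real.exp (2*π*y) * J := by
    have e1 : (∫ t in (-π)..(0:ℝ), f t)
        = ∫ t in (-π)..(0:ℝ), Real.exp (-2*y*t) * (π + t) ^ α := by
      apply integral_congr
      intro t ht
      rw [Set.uIcc_of_le (by linarith : -π ≤ (0:ℝ))] at ht
      have : |t| = -t := abs_of_nonpos ht.2
      simp [hf, this, sub_neg_eq_add]
    have e2 : (∫ s in (0:ℝ)..π, Real.exp (-2*y*(s - π)) * (π + (s - π)) ^ α)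
        = ∫ t in (-π)..(0:ℝ), Real.exp (-2*y*t) * (π + t) ^ α := by
      have := integral_comp_sub_right (a := (0:ℝ)) (b := π)
        (fun t => Real.exp (-2*y*t) * (π + t) ^ α) π
      simpa using this
    rw [e1, ← e2]
    have e3 : ∀ s : ℝ, Real.exp (-2*y*(s - π)) * (π + (s - π)) ^ α
        = Real.exp (2*π*y) * (Real.exp (-2*y*s) * s ^ α) := by
      intro s
      have h' : -2*y*(s-π) = 2*π*y + (-2*y*s) := by ring
      rw [h', Real.exp_add]
      ring_nf
    simp_rw [e3]
    rw [intervalIntegral.integral_const_mul]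
  have hyα : (0:ℝ) < y ^ α := Real.rpow_pos_of_pos hy0 _
  have hadd : y ^ (α+1) = y ^ α * y := by
    rw [Real.rpow_add hy0, Real.rpow_one]
  -- upper bound on J
  have hJle : J ≤ 1 / y ^ (α+1) := by
    have key : ∀ s ∈ Set.Icc (0:ℝ) π,
        Real.exp (-2*y*s) * s ^ α ≤ (y ^ α)⁻¹ * Real.exp (-y*s) := by
      intro s hs
      have hs0 : 0 ≤ s := hs.1
      have hu : 0 ≤ y * s := by positivity
      have h1 : (y*s) ^ α * Real.exp (-(y*s)) ≤ 1 := rpow_mul_exp_le_one hα0 hα1.le hu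
      rw [Real.mul_rpow hy0.le hs0] at h1
      have h3 : s ^ α * Real.exp (-(y*s)) ≤ (y ^ α)⁻¹ := by
        rw [← one_div, le_div_iff₀ hyα]
        calc s ^ α * Real.exp (-(y*s)) * y ^ α
            = y ^ α * s ^ α * Real.exp (-(y*s)) := by ring
          _ ≤ 1 := h1
      have h4 : Real.exp (-2*y*s) = Real.exp (-(y*s)) * Real.exp (-(y*s)) := by
        rw [← Real.exp_add]; ring_nf
      calc Real.exp (-2*y*s) * s ^ α
          = Real.exp (-(y*s)) * (s ^ α * Real.exp (-(y*s))) := by rw [h4]; ring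
        _ ≤ Real.exp (-(y*s)) * (y ^ α)⁻¹ :=
            mul_le_mul_of_nonneg_left h3 (Real.exp_pos _).le
        _ = (y ^ α)⁻¹ * Real.exp (-y*s) := by rw [neg_mul]; ring
    have mono : J ≤ ∫ s in (0:ℝ)..π, (y ^ α)⁻¹ * Real.exp (-y*s) :=
      integral_mono_on hπ.le (hcont2.intervalIntegrable _ _)
        ((Continuous.mul continuous_const
          (Real.continuous_exp.comp (by fun_prop))).intervalIntegrable _ _) key
    have hint : (∫ s in (0:ℝ)..π, Real.exp (-y*s)) = (1 - Real.exp (-y*π)) / y := by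
      have h5 := integral_comp_mul_left (a := (0:ℝ)) (b := π) (f := Real.exp)
        (c := -y) (by intro h'; rw [neg_eq_zero] at h'; linarith : -y ≠ 0)
      simp only [mul_zero, integral_exp, Real.exp_zero, smul_eq_mul] at h5
      have hyne : y ≠ 0 := ne_of_gt hy0
      rw [h5]
      field_simp
      ring
    have hval : (∫ s in (0:ℝ)..π, (y ^ α)⁻¹ * Real.exp (-y*s))
        = (y ^ α)⁻¹ * ((1 - Real.exp (-y*π)) / y) := by
      rw [intervalIntegral.integral_const_mul, hint]
    calc J ≤ (y ^ α)⁻¹ * ((1 - Real.exp (-y*π)) / y) := by rw [← hval]; exact mono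
      _ ≤ (y ^ α)⁻¹ * (1 / y) := by
          gcongr
          linarith [Real.exp_pos (-y*π)]
      _ = 1 / y ^ (α+1) := by rw [hadd]; field_simp
  -- lower bound on J
  have hJge : Real.exp (-1)/8 * (1 / y ^ (α+1)) ≤ J := by
    set b : ℝ := 1/(2*y) with hb
    have hb0 : 0 < b := by positivity
    have hbπ : b ≤ π := by
      have : b ≤ 1/2 := by
        rw [hb]
        apply div_le_div_of_nonneg_left one_pos.le (by norm_num) (by linarith)
      linarith
    have hsplit2 : J = (∫ s in (0:ℝ)..b, Real.exp (-2*y*s) * s ^ α)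
        + ∫ s in b..π, Real.exp (-2*y*s) * s ^ α :=
      (integral_add_adjacent_intervals (hcont2.intervalIntegrable _ _)
        (hcont2.intervalIntegrable _ _)).symm
    have h2nn : 0 ≤ ∫ s in b..π, Real.exp (-2*y*s) * s ^ α := by
      apply integral_nonneg hbπ
      intro u hu
      have hu0 : 0 ≤ u := le_trans hb0.le hu.1
      positivity
    have hmono : (∫ s in (0:ℝ)..b, Real.exp (-1) * s ^ α)
        ≤ ∫ s in (0:ℝ)..b, Real.exp (-2*y*s) * s ^ α := by
      apply integral_mono_on hb0.le
        ((Continuous.mul continuous_const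
          (Real.continuous_rpow_const hα0.le)).intervalIntegrable _ _)
        (hcont2.intervalIntegrable _ _)
      intro s hs
      apply mul_le_mul_of_nonneg_right _ (Real.rpow_nonneg hs.1 α)
      apply Real.exp_le_exp.mpr
      have h6 : 2*y*s ≤ 1 := by
        calc 2*y*s ≤ 2*y*b := by nlinarith [hs.2, hs.1]
          _ = 1 := by rw [hb]; field_simp
      linarith
    have hval2 : (∫ s in (0:ℝ)..b, Real.exp (-1) * s ^ α)
        = Real.exp (-1) * (b ^ (α+1) / (α+1)) := by
      rw [intervalIntegral.integral_const_mul, integral_rpow (Or.inl (by linarith : (-1:ℝ) < α))]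
      rw [Real.zero_rpow (by linarith : α + 1 ≠ 0)]
      ring
    have h2y : (0:ℝ) < 2*y := by linarith
    have e : b ^ (α+1) = ((2*y) ^ (α+1))⁻¹ := by
      rw [hb, one_div, ← Real.inv_rpow h2y.le]
    have e2 : (2*y) ^ (α+1) = 2 ^ (α+1) * y ^ (α+1) := Real.mul_rpow (by norm_num) hy0.le
    have e3 : (2:ℝ) ^ (α+1) ≤ 4 := by
      calc (2:ℝ) ^ (α+1) ≤ (2:ℝ) ^ (2:ℝ) :=
            Real.rpow_le_rpow_of_exponent_le one_le_two (by linarith)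
        _ = 4 := by
            rw [show (2:ℝ) = ((2:ℕ):ℝ) from by norm_num, Real.rpow_natCast]
            norm_num
    have e4 : (0:ℝ) < (2:ℝ) ^ (α+1) := Real.rpow_pos_of_pos (by norm_num) _
    have hb1' : 1 ≤ 4 * y ^ (α+1) * b ^ (α+1) := by
      rw [e, e2, mul_inv]
      have e5 : 4 * y ^ (α+1) * (((2:ℝ) ^ (α+1))⁻¹ * (y ^ (α+1))⁻¹) = 4 / 2 ^ (α+1) := by
        field_simp
      rw [e5, le_div_iff₀ e4]
      linarith
    have hstep : 1 / (8 * y ^ (α+1)) ≤ b ^ (α+1) / (α+1) := by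
      rw [div_le_div_iff₀ (by positivity) (by linarith)]
      nlinarith [hb1']
    calc Real.exp (-1)/8 * (1 / y ^ (α+1))
        = Real.exp (-1) * (1 / (8 * y ^ (α+1))) := by ring
      _ ≤ Real.exp (-1) * (b ^ (α+1) / (α+1)) :=
          mul_le_mul_of_nonneg_left hstep (Real.exp_pos _).le
      _ = ∫ s in (0:ℝ)..b, Real.exp (-1) * s ^ α := hval2.symm
      _ ≤ ∫ s in (0:ℝ)..b, Real.exp (-2*y*s) * s ^ α := hmono
      _ ≤ J := by rw [hsplit2]; linarith
  -- bounds on the right piece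
  have hBnn : 0 ≤ ∫ t in (0:ℝ)..π, f t := by
    apply integral_nonneg hπ.le
    intro t ht
    have h1 : 0 ≤ π - |t| := by
      rw [abs_of_nonneg ht.1]; linarith [ht.2]
    have : (0:ℝ) ≤ Real.exp (-2*y*t) * (π - |t|) ^ α := by positivity
    exact this
  have hBle : (∫ t in (0:ℝ)..π, f t) ≤ π * π := by
    have hm : (∫ t in (0:ℝ)..π, f t) ≤ ∫ _ in (0:ℝ)..π, (π:ℝ) := by
      apply integral_mono_on hπ.le (hcont.intervalIntegrable _ _)
        intervalIntegrable_const
      intro t ht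
      have habs : |t| = t := abs_of_nonneg ht.1
      have h1 : 0 ≤ π - |t| := by rw [habs]; linarith [ht.2]
      have h2 : Real.exp (-2*y*t) ≤ 1 := Real.exp_le_one_iff.mpr (by nlinarith [ht.1])
      have h3 : (π - |t|) ^ α ≤ π ^ α := by
        apply Real.rpow_le_rpow h1 _ hα0.le
        rw [habs]; linarith [ht.1]
      have h4 : π ^ α ≤ π ^ (1:ℝ) := Real.rpow_le_rpow_of_exponent_le hπ1 hα1.le
      rw [Real.rpow_one] at h4
      calc f t = Real.exp (-2*y*t) * (π - |t|) ^ α := rfl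
        _ ≤ 1 * (π - |t|) ^ α := mul_le_mul_of_nonneg_right h2 (Real.rpow_nonneg h1 α)
        _ = (π - |t|) ^ α := one_mul _
        _ ≤ π := le_trans h3 h4
    calc (∫ t in (0:ℝ)..π, f t) ≤ ∫ _ in (0:ℝ)..π, (π:ℝ) := hm
      _ = π * π := by simp [smul_eq_mul]
  -- π² is dominated by exp(2πy)/y^(α+1)
  have hπ2 : π * π ≤ Real.exp (2*π*y) / y ^ (α+1) := by
    have h1 : y ^ (α+1) ≤ y * y := by
      have h1' : y ^ (α+1) ≤ y ^ (2:ℝ) :=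
        Real.rpow_le_rpow_of_exponent_le hy (by linarith)
      rwa [show (2:ℝ) = ((2:ℕ):ℝ) from by norm_num, Real.rpow_natCast, sq] at h1'
    have h2 : π * y ≤ Real.exp (π*y) := by linarith [Real.add_one_le_exp (π*y)]
    have h3 : (π*y) * (π*y) ≤ Real.exp (2*π*y) := by
      have he : Real.exp (2*π*y) = Real.exp (π*y) * Real.exp (π*y) := by
        rw [← Real.exp_add]; ring_nf
      rw [he]
      have hpy : 0 ≤ π * y := by positivity
      exact mul_le_mul h2 h2 hpy (Real.exp_pos _).le
    rw [le_div_iff₀ hyp]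
    nlinarith [mul_le_mul_of_nonneg_left h1 (by positivity : (0:ℝ) ≤ π * π)]
  constructor
  · rw [hsplit, hA]
    calc Real.exp (-1)/8 * (Real.exp (2*π*y) / y ^ (α+1))
        = Real.exp (2*π*y) * (Real.exp (-1)/8 * (1 / y ^ (α+1))) := by ring
      _ ≤ Real.exp (2*π*y) * J := mul_le_mul_of_nonneg_left hJge (Real.exp_pos _).le
      _ ≤ Real.exp (2*π*y) * J + ∫ t in (0:ℝ)..π, f t := le_add_of_nonneg_right hBnn
  · rw [hsplit, hA]
    have h5 : Real.exp (2*π*y) * J ≤ Real.exp (2*π*y) * (1 / y ^ (α+1)) :=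
      mul_le_mul_of_nonneg_left hJle (Real.exp_pos _).le
    calc Real.exp (2*π*y) * J + ∫ t in (0:ℝ)..π, f t
        ≤ Real.exp (2*π*y) * (1 / y ^ (α+1)) + π * π := add_le_add h5 hBle
      _ ≤ Real.exp (2*π*y) / y ^ (α+1) + Real.exp (2*π*y) / y ^ (α+1) := by
          rw [mul_one_div]
          exact add_le_add_right hπ2 _
      _ = 2 * (Real.exp (2*π*y) / y ^ (α+1)) := by ring

theorem K_alpha_asymptotics (α : ℝ) (hα : α ∈ Set.Ioo (0:ℝ) 1) :
    ∃ c C Y : ℝ, 0 < c ∧ 0 < C ∧ 0 < Y ∧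
      ∀ y : ℝ, Y ≤ |y| →
        c * (Real.exp (2*π*|y|) / |y| ^ (α+1)) ≤
          (∫ t in Set.Ioo (-π) π, Real.exp (-2*y*t) * (π - |t|) ^ α) ∧
        (∫ t in Set.Ioo (-π) π, Real.exp (-2*y*t) * (π - |t|) ^ α) ≤
          C * (Real.exp (2*π*|y|) / |y| ^ (α+1)) := by
  have hπ : (0:ℝ) < π := Real.pi_pos
  refine ⟨Real.exp (-1)/8, 2, 1, by positivity, by norm_num, one_pos, ?_⟩
  intro y hy1
  have hred : (∫ t in Set.Ioo (-π) π, Real.exp (-2*y*t) * (π - |t|) ^ α)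
      = ∫ t in (-π)..π, Real.exp ((-2) * |y| * t) * (π - |t|) ^ α := by
    rw [← MeasureTheory.integral_Ioc_eq_integral_Ioo,
        ← intervalIntegral.integral_of_le (by linarith : -π ≤ π)]
    rcases abs_cases y with ⟨h, _⟩ | ⟨h, _⟩
    · rw [h]
    · rw [h]
      have key := intervalIntegral.integral_comp_neg (a := -π) (b := π)
        (fun t => Real.exp (-2*y*t) * (π - |t|) ^ α)
      simp only [abs_neg, neg_neg] at key
      rw [← key]
      apply integral_congr
      intro t _
      have h7 : -2*y*(-t) = -2*(-y)*t := by ring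
      simp only [h7]
  rw [hred]
  exact main_pos hα hy1
end

section
/- Let u_n = 2^{n-1}Q with Q > 1, and let β_n ∈ (1/3, 2/3), v_n ∈ [u_n - √u_n - 1, u_n - √u_n + 1]. Set S(z) = ∏_{n≥1}(1 - z/(u_n+β_n)) and G₁(z) = ∏_{n≥1}(1 - z/v_n). Then there exist constants 0 < c₁ ≤ c₂ (depending on Q) such that c₁ ≤ |G₁(z)/S(z)| ≤ c₂ for all z ∈ ℂ outside the union of the balls B_{2√u_n}(u_n), n ≥ 1. -/
set_option maxHeartbeats 1000000

open Real

/-- Basic consequences of `16 ≤ u`. -/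
lemma lacq_basic {uu : ℝ} (hu : 16 ≤ uu) :
    4 ≤ Real.sqrt uu ∧ Real.sqrt uu * Real.sqrt uu = uu ∧ Real.sqrt uu ≤ uu / 4 := by
  have h0 : (0:ℝ) ≤ uu := by linarith
  have h4 : 4 ≤ Real.sqrt uu := by
    have : Real.sqrt 16 ≤ Real.sqrt uu := Real.sqrt_le_sqrt hu
    rwa [show (16:ℝ) = 4^2 by norm_num, Real.sqrt_sq (by norm_num)] at this
  have hsq : Real.sqrt uu * Real.sqrt uu = uu := Real.mul_self_sqrt h0
  refine ⟨h4, hsq, ?_⟩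
  nlinarith [Real.sqrt_nonneg uu]

/-- The factor `1 - z/a` does not vanish when `z` is outside the ball. -/
lemma lacq_ne {uu a : ℝ} {z : ℂ}
    (hu : 16 ≤ uu)
    (ha1 : uu - Real.sqrt uu - 1 ≤ a) (ha2 : a ≤ uu + 1)
    (hball : 2 * Real.sqrt uu ≤ ‖z - (uu:ℂ)‖) :
    ((1:ℂ) - z/(a:ℂ) ≠ 0) ∧ 0 < a := by
  obtain ⟨h4, hsq, hs4⟩ := lacq_basic hu
  have hu0 : (0:ℝ) < uu := by linarith
  have h116 : (1:ℝ) ≤ uu/16 := by linarith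
  have ha0 : (0:ℝ) < a := by nlinarith
  refine ⟨?_, ha0⟩
  intro h
  have haC : (a:ℂ) ≠ 0 := by exact_mod_cast ha0.ne'
  have hz : z = (a:ℂ) := by
    field_simp at h
    exact (sub_eq_zero.mp (by rw [h, mul_zero])).symm
  rw [hz, ← Complex.ofReal_sub, Complex.norm_real, Real.norm_eq_abs] at hball
  have habs : |a - uu| ≤ Real.sqrt uu + 1 := abs_le.mpr ⟨by linarith, by linarith⟩
  linarith

lemma lacq_sqrt_two_pow (n : ℕ) : Real.sqrt ((2:ℝ)^n) = (Real.sqrt 2)^n := by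
  induction n with
  | zero => simp
  | succ n ih => rw [pow_succ, pow_succ, Real.sqrt_mul (by positivity), ih]

lemma lacq_tprod_eq_cexp {f : ℕ → ℂ} (h0 : ∀ n, f n ≠ 0)
    (hs : Summable fun n => Complex.log (f n)) :
    (∏' n, f n) = Complex.exp (∑' n, Complex.log (f n)) := by
  have h := hs.hasSum.cexp
  have he : (Complex.exp ∘ fun n => Complex.log (f n)) = f :=
    funext fun n => Complex.exp_log (h0 n)
  rw [he] at h
  exact h.tprod_eq

/-- Key per-factor estimate. -/
lemma lacq_key {uu a c : ℝ} {z : ℂ}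
    (hu : 16 ≤ uu)
    (ha1 : uu - Real.sqrt uu - 1 ≤ a) (ha2 : a ≤ uu + 1)
    (hc1 : uu - Real.sqrt uu - 1 ≤ c) (hc2 : c ≤ uu + 1)
    (hball : 2 * Real.sqrt uu ≤ ‖z - (uu:ℂ)‖) :
    ‖(1 - z/(a:ℂ))/(1 - z/(c:ℂ)) - 1‖ ≤
      (if 2 * ‖z‖ ≤ uu ∨ 2 * uu ≤ ‖z‖ then 16 / Real.sqrt uu else 16) := by
  obtain ⟨h4, hsq, hs4⟩ := lacq_basic hu
  set s := Real.sqrt uu with hs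
  set r := ‖z‖ with hr
  clear_value s r
  have hr0 : 0 ≤ r := hr ▸ norm_nonneg z
  have hu0 : (0:ℝ) < uu := by linarith
  have hs0 : (0:ℝ) < s := by linarith
  have h116 : (1:ℝ) ≤ uu/16 := by linarith
  have hahalf : uu/2 ≤ a := by linarith
  have hchalf : uu/2 ≤ c := by linarith
  have ha0 : (0:ℝ) < a := by linarith
  have hc0 : (0:ℝ) < c := by linarith
  -- |c - z| ≥ s/2   (since |c - u| ≤ s + 1)
  have hcu : ‖(c:ℂ) - (uu:ℂ)‖ ≤ s + 1 := by
    rw [← Complex.ofReal_sub, Complex.norm_real, Real.norm_eq_abs, abs_le]; constructor <;> nlinarith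
  have hcz : s/2 ≤ ‖(c:ℂ) - z‖ := by
    have h := norm_sub_le_norm_sub_add_norm_sub z (uu:ℂ) (c:ℂ)
    -- ‖z - c‖ ≥ ‖z - u‖ - ‖u - c‖
    have h2 : ‖z - (uu:ℂ)‖ - ‖(c:ℂ) - (uu:ℂ)‖ ≤ ‖(c:ℂ) - z‖ := by
      have := norm_sub_norm_le (z - (uu:ℂ)) (z - (c:ℂ))
      have e : z - (uu:ℂ) - (z - (c:ℂ)) = (c:ℂ) - (uu:ℂ) := by ring
      rw [e] at this
      have e2 : ‖z - (c:ℂ)‖ = ‖(c:ℂ) - z‖ := norm_sub_rev _ _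
      linarith [this, e2.le, e2.ge]
    linarith
  have hcz0 : (0:ℝ) < ‖(c:ℂ) - z‖ := by linarith
  have hczne : (c:ℂ) - z ≠ 0 := by
    intro h; rw [h, norm_zero] at hcz0; exact lt_irrefl _ hcz0
  have haC : (a:ℂ) ≠ 0 := by exact_mod_cast ha0.ne'
  have hcC : (c:ℂ) ≠ 0 := by exact_mod_cast hc0.ne'
  -- the identity
  have hid : (1 - z/(a:ℂ))/(1 - z/(c:ℂ)) - 1 = z * ((a:ℂ) - c) / ((a:ℂ) * ((c:ℂ) - z)) := by
    have hBne : (1:ℂ) - z/(c:ℂ) ≠ 0 := by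
      have : (1:ℂ) - z/(c:ℂ) = ((c:ℂ) - z)/(c:ℂ) := by field_simp
      rw [this]
      exact div_ne_zero hczne hcC
    field_simp
    ring
  rw [hid]
  -- norm computation
  have hnorm : ‖z * ((a:ℂ) - c) / ((a:ℂ) * ((c:ℂ) - z))‖
      = r * ‖(a:ℂ) - c‖ / (a * ‖(c:ℂ) - z‖) := by
    rw [norm_div, norm_mul, norm_mul, Complex.norm_real, Real.norm_eq_abs, abs_of_pos ha0, ← hr]
  rw [hnorm]
  have hac : ‖(a:ℂ) - c‖ ≤ 2 * s := by
    rw [← Complex.ofReal_sub, Complex.norm_real, Real.norm_eq_abs, abs_le]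
    constructor <;> nlinarith
  have hnum : r * ‖(a:ℂ) - c‖ ≤ r * (2*s) :=
    mul_le_mul_of_nonneg_left hac hr0
  by_cases hcase : 2 * r ≤ uu ∨ 2 * uu ≤ r
  · rw [if_pos hcase]
    rcases hcase with hfar | hnear
    · -- far: u ≥ 2r, |c - z| ≥ c - r ≥ u/8
      have hczf : uu/8 ≤ ‖(c:ℂ) - z‖ := by
        have h := norm_sub_norm_le ((c:ℂ)) z
        rw [Complex.norm_real, Real.norm_eq_abs, abs_of_pos hc0] at h
        nlinarith
      have : r * ‖(a:ℂ) - c‖ / (a * ‖(c:ℂ) - z‖) ≤ (uu/2 * (2*s)) / (uu/2 * (uu/8)) := by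
        apply div_le_div₀ (by positivity) ?_ (by positivity)
          (mul_le_mul hahalf hczf (by positivity) (by positivity))
        calc r * ‖(a:ℂ) - c‖ ≤ r * (2*s) := hnum
        _ ≤ (uu/2) * (2*s) := by nlinarith
      calc r * ‖(a:ℂ) - c‖ / (a * ‖(c:ℂ) - z‖) ≤ (uu/2 * (2*s)) / (uu/2 * (uu/8)) := this
      _ = 16 * s / uu := by rw [div_eq_div_iff (ne_of_gt (by positivity)) (ne_of_gt (by positivity))]; ring
      _ = 16 / s := by rw [div_eq_div_iff hu0.ne' hs0.ne']; nlinarith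
    · -- near: r ≥ 2u, |c - z| ≥ r - c ≥ r/4
      have hczf : r/4 ≤ ‖(c:ℂ) - z‖ := by
        have h := norm_sub_norm_le z ((c:ℂ))
        rw [Complex.norm_real, Real.norm_eq_abs, abs_of_pos hc0, norm_sub_rev] at h
        nlinarith
      have : r * ‖(a:ℂ) - c‖ / (a * ‖(c:ℂ) - z‖) ≤ (r * (2*s)) / (uu/2 * (r/4)) := by
        apply div_le_div₀ (by positivity) hnum ?_
          (mul_le_mul hahalf hczf (by positivity) (by positivity))
        have : (0:ℝ) < r := by linarith
        positivity
      have hr0' : (0:ℝ) < r := by linarith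
      calc r * ‖(a:ℂ) - c‖ / (a * ‖(c:ℂ) - z‖) ≤ (r * (2*s)) / (uu/2 * (r/4)) := this
      _ = 16 * s / uu := by rw [div_eq_div_iff (ne_of_gt (by positivity)) (ne_of_gt (by positivity))]; ring
      _ = 16 / s := by rw [div_eq_div_iff hu0.ne' hs0.ne']; nlinarith
  · rw [if_neg hcase]
    push_neg at hcase
    obtain ⟨h1, h2⟩ := hcase
    have : r * ‖(a:ℂ) - c‖ / (a * ‖(c:ℂ) - z‖) ≤ (2*uu * (2*s)) / (uu/2 * (s/2)) := by
      apply div_le_div₀ (by positivity) ?_ (by positivity)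
        (mul_le_mul hahalf hcz (by positivity) (by positivity))
      calc r * ‖(a:ℂ) - c‖ ≤ r * (2*s) := hnum
      _ ≤ (2*uu) * (2*s) := by nlinarith
    calc r * ‖(a:ℂ) - c‖ / (a * ‖(c:ℂ) - z‖) ≤ (2*uu * (2*s)) / (uu/2 * (s/2)) := this
    _ = 16 := by rw [div_eq_iff (ne_of_gt (by positivity))]; ring

theorem quotient_of_lacunary_products_bounded
    (Q : ℝ) (hQ : 16 ≤ Q)
    (u : ℕ → ℝ) (hu : ∀ n, u n = 2 ^ n * Q)
    (β : ℕ → ℝ) (hβ : ∀ n, β n ∈ Set.Ioo (1/3 : ℝ) (2/3))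
    (v : ℕ → ℝ) (hv : ∀ n, |v n - (u n - Real.sqrt (u n))| ≤ 1) :
    ∃ c₁ c₂ : ℝ, 0 < c₁ ∧ c₁ ≤ c₂ ∧
      ∀ z : ℂ, z ∉ ⋃ n : ℕ, Metric.ball ((u n : ℂ)) (2 * Real.sqrt (u n)) →
        c₁ ≤ ‖(∏' n : ℕ, (1 - z / (v n : ℂ))) / (∏' n : ℕ, (1 - z / ((u n : ℂ) + (β n : ℂ))))‖ ∧
        ‖(∏' n : ℕ, (1 - z / (v n : ℂ))) / (∏' n : ℕ, (1 - z / ((u n : ℂ) + (β n : ℂ))))‖ ≤ c₂ := by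
  refine ⟨Real.exp (-48), Real.exp 48, Real.exp_pos _, Real.exp_le_exp.mpr (by norm_num), ?_⟩
  intro z hz
  -- basic facts about `u`
  have hQ0 : (0:ℝ) < Q := by linarith
  have hu16 : ∀ n, 16 ≤ u n := by
    intro n
    rw [hu n]
    have h1 : (1:ℝ) ≤ 2^n := one_le_pow₀ (by norm_num)
    nlinarith
  have hu0 : ∀ n, (0:ℝ) < u n := fun n => by linarith [hu16 n]
  -- ball condition
  have hball : ∀ n, 2 * Real.sqrt (u n) ≤ ‖z - (u n : ℂ)‖ := by
    intro n
    have h1 : z ∉ Metric.ball ((u n : ℂ)) (2 * Real.sqrt (u n)) := by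
      intro h; exact hz (Set.mem_iUnion.mpr ⟨n, h⟩)
    rw [Metric.mem_ball, Complex.dist_eq, not_lt] at h1
    exact h1
  -- interval hypotheses for `v` and `w := u + β`
  set w : ℕ → ℝ := fun n => u n + β n with hw
  have hv1 : ∀ n, u n - Real.sqrt (u n) - 1 ≤ v n := by
    intro n; have := abs_le.mp (hv n); linarith [this.1]
  have hv2 : ∀ n, v n ≤ u n + 1 := by
    intro n; have := abs_le.mp (hv n); linarith [this.2, Real.sqrt_nonneg (u n)]
  have hw1 : ∀ n, u n - Real.sqrt (u n) - 1 ≤ w n := by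
    intro n; have := (hβ n).1; simp only [hw]; nlinarith [Real.sqrt_nonneg (u n)]
  have hw2 : ∀ n, w n ≤ u n + 1 := by
    intro n; have := (hβ n).2; simp only [hw]; linarith
  -- nonvanishing
  have hA0 : ∀ n, (1:ℂ) - z/(v n:ℂ) ≠ 0 :=
    fun n => (lacq_ne (hu16 n) (hv1 n) (hv2 n) (hball n)).1
  have hB0 : ∀ n, (1:ℂ) - z/(w n:ℂ) ≠ 0 :=
    fun n => (lacq_ne (hu16 n) (hw1 n) (hw2 n) (hball n)).1
  have hvpos : ∀ n, (0:ℝ) < v n := fun n => (lacq_ne (hu16 n) (hv1 n) (hv2 n) (hball n)).2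
  have hwpos : ∀ n, (0:ℝ) < w n := fun n => (lacq_ne (hu16 n) (hw1 n) (hw2 n) (hball n)).2
  -- the β-coercion
  have hBeq : ∀ n, (1:ℂ) - z/((u n : ℂ) + (β n : ℂ)) = 1 - z/(w n : ℂ) := by
    intro n; simp only [hw]; push_cast; ring_nf
  set r := ‖z‖ with hr
  have hr0 : 0 ≤ r := hr ▸ norm_nonneg z
  -- the bounding sequence
  set b : ℕ → ℝ := fun n => if 2 * r ≤ u n ∨ 2 * u n ≤ r then 16 / Real.sqrt (u n) else 16
    with hbdef
  have hb0 : ∀ n, 0 ≤ b n := by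
    intro n; simp only [hbdef]
    split <;> positivity
  -- the log-difference sequence and its bound
  set t : ℕ → ℝ := fun n => Real.log ‖(1:ℂ) - z/(v n:ℂ)‖ - Real.log ‖(1:ℂ) - z/(w n:ℂ)‖
    with htdef
  have keyb : ∀ n, |t n| ≤ b n := by
    intro n
    have hA := lacq_key (hu16 n) (hv1 n) (hv2 n) (hw1 n) (hw2 n) (hball n) (z := z)
    have hB := lacq_key (hu16 n) (hw1 n) (hw2 n) (hv1 n) (hv2 n) (hball n) (z := z)
    have hAn : (0:ℝ) < ‖(1:ℂ) - z/(v n:ℂ)‖ := norm_pos_iff.mpr (hA0 n)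
    have hBn : (0:ℝ) < ‖(1:ℂ) - z/(w n:ℂ)‖ := norm_pos_iff.mpr (hB0 n)
    have hABnorm : ‖((1:ℂ) - z/(v n:ℂ))/((1:ℂ) - z/(w n:ℂ))‖ ≤ 1 + b n := by
      have h1 := norm_sub_norm_le (((1:ℂ) - z/(v n:ℂ))/((1:ℂ) - z/(w n:ℂ))) 1
      rw [norm_one] at h1
      simp only [hbdef]
      simp only [hr] at hA ⊢
      linarith [hA]
    have hBAnorm : ‖((1:ℂ) - z/(w n:ℂ))/((1:ℂ) - z/(v n:ℂ))‖ ≤ 1 + b n := by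
      have h1 := norm_sub_norm_le (((1:ℂ) - z/(w n:ℂ))/((1:ℂ) - z/(v n:ℂ))) 1
      rw [norm_one] at h1
      simp only [hbdef]
      simp only [hr] at hB ⊢
      linarith [hB]
    rw [abs_le]
    constructor
    · have hlog : Real.log (‖(1:ℂ) - z/(w n:ℂ)‖ / ‖(1:ℂ) - z/(v n:ℂ)‖)
          ≤ ‖(1:ℂ) - z/(w n:ℂ)‖ / ‖(1:ℂ) - z/(v n:ℂ)‖ - 1 :=
        Real.log_le_sub_one_of_pos (by positivity)
      rw [Real.log_div hBn.ne' hAn.ne'] at hlog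
      rw [← norm_div] at hlog
      simp only [htdef]
      linarith [hBAnorm]
    · have hlog : Real.log (‖(1:ℂ) - z/(v n:ℂ)‖ / ‖(1:ℂ) - z/(w n:ℂ)‖)
          ≤ ‖(1:ℂ) - z/(v n:ℂ)‖ / ‖(1:ℂ) - z/(w n:ℂ)‖ - 1 :=
        Real.log_le_sub_one_of_pos (by positivity)
      rw [Real.log_div hAn.ne' hBn.ne'] at hlog
      rw [← norm_div] at hlog
      simp only [htdef]
      linarith [hABnorm]
  -- summability and bound for b
  have hex : ∃ n, r < 2 * u n := by
    obtain ⟨k, hk⟩ := exists_nat_gt r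
    refine ⟨k, ?_⟩
    have h1 : (k:ℝ) < 2^k := by exact_mod_cast Nat.lt_two_pow_self (n := k)
    have h2 : (2:ℝ)^k ≤ 2^k * Q := by nlinarith [pow_pos (show (0:ℝ) < 2 by norm_num) k]
    rw [hu k]
    nlinarith [pow_pos (show (0:ℝ) < 2 by norm_num) k]
  set N := Nat.find hex with hN
  have hNspec : r < 2 * u N := Nat.find_spec hex
  have sqrt2_pos : (0:ℝ) < Real.sqrt 2 := Real.sqrt_pos.mpr (by norm_num)
  have sqrt2_gt : (4/3:ℝ) ≤ Real.sqrt 2 := by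
    nlinarith [Real.sq_sqrt (show (0:ℝ) ≤ 2 by norm_num), Real.sqrt_nonneg 2]
  have sqrt2_inv_lt : (Real.sqrt 2)⁻¹ < 1 := inv_lt_one_of_one_lt₀ (by nlinarith)
  have sqrtQ4 : 4 ≤ Real.sqrt Q := (lacq_basic hQ).1
  have hsqrtu : ∀ n, Real.sqrt (u n) = (Real.sqrt 2)^n * Real.sqrt Q := by
    intro n
    rw [hu n, Real.sqrt_mul (by positivity), lacq_sqrt_two_pow]
  set B' : ℕ → ℝ := fun n => (16/Real.sqrt Q) * ((Real.sqrt 2)⁻¹)^n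
      + ((if n = N then (16:ℝ) else 0) + (if n = N+1 then (16:ℝ) else 0)) with hB'def
  have hgeo : Summable (fun n : ℕ => (16/Real.sqrt Q) * ((Real.sqrt 2)⁻¹)^n) :=
    (summable_geometric_of_lt_one (by positivity) sqrt2_inv_lt).mul_left _
  have hB'sum : Summable B' :=
    hgeo.add (((hasSum_ite_eq N (16:ℝ)).summable).add ((hasSum_ite_eq (N+1) (16:ℝ)).summable))
  have hbB' : ∀ n, b n ≤ B' n := by
    intro n
    simp only [hbdef, hB'def]
    by_cases hcase : 2 * r ≤ u n ∨ 2 * u n ≤ r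
    · rw [if_pos hcase]
      have he : 16 / Real.sqrt (u n) = (16/Real.sqrt Q) * ((Real.sqrt 2)⁻¹)^n := by
        rw [hsqrtu n, inv_pow]
        rw [div_mul_eq_div_div, div_div]
        ring_nf
      rw [he]
      have h1 : (0:ℝ) ≤ if n = N then (16:ℝ) else 0 := by split <;> norm_num
      have h2 : (0:ℝ) ≤ if n = N+1 then (16:ℝ) else 0 := by split <;> norm_num
      linarith
    · rw [if_neg hcase]
      push_neg at hcase
      obtain ⟨h1, h2⟩ := hcase
      -- middle case : N ≤ n ≤ N + 1
      have hnN : N ≤ n := Nat.find_min' hex h2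
      have hnN1 : n ≤ N + 1 := by
        by_contra hcon
        push_neg at hcon
        have hle : N + 2 ≤ n := hcon
        have hpow : (2:ℝ)^(N+2) ≤ 2^n := by
          apply pow_le_pow_right₀ (by norm_num) hle
        have e1 : u n = 2^n * Q := hu n
        have e2 : u N = 2^N * Q := hu N
        have : 4 * u N ≤ u n := by
          rw [e1, e2]
          have : (2:ℝ)^(N+2) = 4 * 2^N := by ring
          nlinarith
        linarith
      have heq : n = N ∨ n = N + 1 := by omega
      have hpos : (0:ℝ) ≤ (16/Real.sqrt Q) * ((Real.sqrt 2)⁻¹)^n := by positivity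
      rcases heq with h | h
      · rw [if_pos h]
        have h2' : (0:ℝ) ≤ if n = N+1 then (16:ℝ) else 0 := by split <;> norm_num
        linarith
      · rw [if_pos h]
        have h1' : (0:ℝ) ≤ if n = N then (16:ℝ) else 0 := by split <;> norm_num
        linarith
  have hbsum : Summable b := hB'sum.of_nonneg_of_le hb0 hbB'
  have htsumb : ∑' n, b n ≤ 48 := by
    have h1 : ∑' n, b n ≤ ∑' n, B' n := Summable.tsum_le_tsum hbB' hbsum hB'sum
    have h2 : ∑' n, B' n = (16/Real.sqrt Q) * (1 - (Real.sqrt 2)⁻¹)⁻¹ + (16 + 16) := by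
      simp only [hB'def]
      rw [Summable.tsum_add hgeo (((hasSum_ite_eq N (16:ℝ)).summable).add
        ((hasSum_ite_eq (N+1) (16:ℝ)).summable))]
      rw [Summable.tsum_add ((hasSum_ite_eq N (16:ℝ)).summable) ((hasSum_ite_eq (N+1) (16:ℝ)).summable)]
      rw [tsum_mul_left, tsum_geometric_of_lt_one (by positivity) sqrt2_inv_lt]
      rw [tsum_ite_eq, tsum_ite_eq]
    have h3 : (16/Real.sqrt Q) * (1 - (Real.sqrt 2)⁻¹)⁻¹ ≤ 16 := by
      have hQle : 16/Real.sqrt Q ≤ 4 := by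
        rw [div_le_iff₀ (by positivity)]; linarith
      have hinv : (1 - (Real.sqrt 2)⁻¹)⁻¹ ≤ 4 := by
        have h4 : (Real.sqrt 2)⁻¹ ≤ 3/4 := by
          rw [inv_le_comm₀ (by positivity) (by norm_num)]
          linarith
        have h5 : (1/4 : ℝ) ≤ 1 - (Real.sqrt 2)⁻¹ := by linarith
        rw [inv_le_comm₀ (by linarith) (by norm_num)]
        linarith
      have hp1 : (0:ℝ) ≤ 16/Real.sqrt Q := by positivity
      have hp2 : (0:ℝ) ≤ (1 - (Real.sqrt 2)⁻¹)⁻¹ := by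
        have h4 : (Real.sqrt 2)⁻¹ ≤ 3/4 := by
          rw [inv_le_comm₀ (by positivity) (by norm_num)]
          linarith
        have : (0:ℝ) ≤ 1 - (Real.sqrt 2)⁻¹ := by linarith
        exact inv_nonneg.mpr this
      nlinarith
    linarith
  -- summability of the complex logs
  have hlogsum : ∀ (x : ℕ → ℝ), (∀ n, 0 < x n) → (∀ n, u n / 2 ≤ x n) →
      Summable (fun n => Complex.log (1 - z/(x n:ℂ))) := by
    intro x hx0 hx
    apply Summable.of_norm_bounded_eventually_nat (g := fun n => (3*r/Q) * (1/2:ℝ)^n)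
    · exact (summable_geometric_of_lt_one (by norm_num) (by norm_num)).mul_left _
    · have htend : Filter.Tendsto (fun n : ℕ => (2*r/Q) * (1/2:ℝ)^n) Filter.atTop (nhds 0) := by
        have := tendsto_pow_atTop_nhds_zero_of_lt_one (show (0:ℝ) ≤ 1/2 by norm_num)
          (show (1/2:ℝ) < 1 by norm_num)
        have h2 := this.const_mul (2*r/Q)
        simpa using h2
      filter_upwards [htend.eventually_lt_const (show (0:ℝ) < 1/2 by norm_num)] with n hn
      have hxq : ‖z/(x n:ℂ)‖ = r/(x n) := by
        rw [norm_div, Complex.norm_real, Real.norm_eq_abs, abs_of_pos (hx0 n), hr]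
      have hub : r/(x n) ≤ (2*r/Q) * (1/2:ℝ)^n := by
        have h1 : u n / 2 ≤ x n := hx n
        have h2 : u n = 2^n * Q := hu n
        have hpow : (0:ℝ) < 2^n := pow_pos (by norm_num) n
        have hx0n := hx0 n
        rw [div_le_iff₀ hx0n]
        have e : (2*r/Q) * (1/2:ℝ)^n = 2*r/(2^n * Q) := by
          rw [div_pow, one_pow, div_mul_div_comm, mul_one, mul_comm Q ((2:ℝ)^n)]
        rw [e, div_mul_eq_mul_div, le_div_iff₀ (by positivity)]
        nlinarith
      have hsmall : ‖z/(x n:ℂ)‖ ≤ 1/2 := by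
        rw [hxq]; linarith
      have he : (1:ℂ) - z/(x n:ℂ) = 1 + (-(z/(x n:ℂ))) := by ring
      rw [he]
      have hlb := Complex.norm_log_one_add_half_le_self (z := -(z/(x n:ℂ)))
        (by rwa [norm_neg])
      rw [norm_neg] at hlb
      calc ‖Complex.log (1 + -(z/(x n:ℂ)))‖ ≤ 3/2 * ‖z/(x n:ℂ)‖ := hlb
      _ ≤ 3/2 * ((2*r/Q) * (1/2:ℝ)^n) := by
          rw [hxq]; nlinarith [hub]
      _ = (3*r/Q) * (1/2:ℝ)^n := by ring
  have hvhalf : ∀ n, u n / 2 ≤ v n := by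
    intro n
    obtain ⟨h4, hsq, hs4⟩ := lacq_basic (hu16 n)
    linarith [hv1 n, hu16 n]
  have hwhalf : ∀ n, u n / 2 ≤ w n := by
    intro n
    have hb := (hβ n).1
    simp only [hw]
    linarith [hu16 n]
  have hLA : Summable (fun n => Complex.log (1 - z/(v n:ℂ))) := hlogsum v hvpos hvhalf
  have hLB : Summable (fun n => Complex.log (1 - z/(w n:ℂ))) := hlogsum w hwpos hwhalf
  -- products as exponentials
  have hPA : (∏' n : ℕ, ((1:ℂ) - z/(v n:ℂ)))
      = Complex.exp (∑' n, Complex.log (1 - z/(v n:ℂ))) := lacq_tprod_eq_cexp hA0 hLA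
  have hPB : (∏' n : ℕ, ((1:ℂ) - z/((u n : ℂ) + (β n : ℂ))))
      = Complex.exp (∑' n, Complex.log (1 - z/(w n:ℂ))) := by
    have : (fun n : ℕ => (1:ℂ) - z/((u n : ℂ) + (β n : ℂ))) = fun n => (1:ℂ) - z/(w n:ℂ) :=
      funext fun n => hBeq n
    rw [show (∏' n : ℕ, ((1:ℂ) - z/((u n : ℂ) + (β n : ℂ)))) = ∏' n : ℕ, ((1:ℂ) - z/(w n:ℂ))
      from by rw [this]]
    exact lacq_tprod_eq_cexp hB0 hLB
  -- the real part of the log-sum difference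
  have hsumreA : Summable (fun n => (Complex.log (1 - z/(v n:ℂ))).re) :=
    (Complex.hasSum_re hLA.hasSum).summable
  have hsumreB : Summable (fun n => (Complex.log (1 - z/(w n:ℂ))).re) :=
    (Complex.hasSum_re hLB.hasSum).summable
  have htre : ∀ n, t n = (Complex.log (1 - z/(v n:ℂ))).re - (Complex.log (1 - z/(w n:ℂ))).re := by
    intro n
    simp only [htdef, Complex.log_re]
  have htsummable : Summable t := by
    rw [show t = fun n => (Complex.log (1 - z/(v n:ℂ))).re - (Complex.log (1 - z/(w n:ℂ))).re
      from funext htre]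
    exact hsumreA.sub hsumreB
  have hrepart : (∑' n, Complex.log (1 - z/(v n:ℂ))).re
      - (∑' n, Complex.log (1 - z/(w n:ℂ))).re = ∑' n, t n := by
    rw [Complex.re_tsum hLA, Complex.re_tsum hLB, ← Summable.tsum_sub hsumreA hsumreB]
    congr 1
    exact funext fun n => (htre n).symm
  -- bounds on ∑' t
  have htle : ∑' n, t n ≤ 48 := by
    have h1 : ∀ n, t n ≤ b n := fun n => (abs_le.mp (keyb n)).2
    calc ∑' n, t n ≤ ∑' n, b n := Summable.tsum_le_tsum h1 htsummable hbsum
    _ ≤ 48 := htsumb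
  have htge : -48 ≤ ∑' n, t n := by
    have h1 : ∀ n, -(b n) ≤ t n := fun n => (abs_le.mp (keyb n)).1
    have h2 : ∑' n, -(b n) ≤ ∑' n, t n := Summable.tsum_le_tsum h1 hbsum.neg htsummable
    rw [tsum_neg] at h2
    linarith
  -- final computation
  rw [hPA, hPB, ← Complex.exp_sub]
  rw [Complex.norm_exp, Complex.sub_re, hrepart]
  exact ⟨Real.exp_le_exp.mpr htge, Real.exp_le_exp.mpr htle⟩
end

section
/- Subharmonic mean-value comparison: if u is a nonnegative subharmonic function on a neighborhood of the closed disc B_{1/2}(a) ⊂ ℂ, then ∫_{B_{1/4}(a)} u dμ₂ ≤ C·∫_{B_{1/2}(a) \ B_{1/4}(a)} u dμ₂ for an absolute constant C > 0 (independent of a and u), where μ₂ is planar Lebesgue measure. -/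
open Real MeasureTheory Complex

/-- A continuous function satisfying the sub-mean-value inequality on circles
contained (with their closed discs) in `s`. -/
def SubmeanOn (f : ℂ → ℝ) (s : Set ℂ) : Prop :=
  ContinuousOn f s ∧
    ∀ c : ℂ, ∀ r : ℝ, 0 < r → Metric.closedBall c r ⊆ s →
      f c ≤ (1 / (2 * π)) * ∫ θ in (0:ℝ)..(2*π), f (c + r * Complex.exp (θ * Complex.I))

lemma circle_submean (f : ℂ → ℝ) (s : Set ℂ) (hf : SubmeanOn f s)
    (c : ℂ) (r : ℝ) (hr : 0 < r) (hsub : Metric.closedBall c r ⊆ s) :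
    2 * π * f c ≤ ∫ θ in Set.Ioo (-π) π, f (c + r * (Real.cos θ + Real.sin θ * Complex.I)) := by
  have h := hf.2 c r hr hsub
  have hper : Function.Periodic (fun θ : ℝ => f (c + r * Complex.exp (θ * Complex.I))) (2 * π) := by
    intro θ
    simp only []
    congr 2
    rw [show ((θ + 2*π : ℝ) : ℂ) * Complex.I = θ * Complex.I + 2*π*Complex.I by push_cast; ring,
      Complex.exp_add, Complex.exp_two_pi_mul_I, mul_one]
  have heq : (∫ θ in (0:ℝ)..(2*π), f (c + r * Complex.exp (θ * Complex.I)))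
      = ∫ θ in (-π)..π, f (c + r * Complex.exp (θ * Complex.I)) := by
    have := hper.intervalIntegral_add_eq 0 (-π)
    rw [zero_add] at this
    rw [this, show -π + 2*π = π by ring]
  have hexp : ∀ θ : ℝ, (Complex.exp (θ * Complex.I)) = (Real.cos θ + Real.sin θ * Complex.I) := by
    intro θ
    rw [Complex.exp_mul_I]
    push_cast
    ring
  have h2 : (∫ θ in (-π)..π, f (c + r * Complex.exp (θ * Complex.I)))
      = ∫ θ in Set.Ioo (-π) π, f (c + r * (Real.cos θ + Real.sin θ * Complex.I)) := by
    rw [intervalIntegral.integral_of_le (by linarith [Real.pi_pos]),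
      MeasureTheory.integral_Ioc_eq_integral_Ioo]
    simp_rw [hexp]
  rw [heq, h2] at h
  have hπ : 0 < 2 * π := by positivity
  calc 2 * π * f c ≤ 2 * π * ((1 / (2*π)) * ∫ θ in Set.Ioo (-π) π,
        f (c + r * (Real.cos θ + Real.sin θ * Complex.I))) := by
        exact mul_le_mul_of_nonneg_left h (le_of_lt hπ)
    _ = _ := by rw [← mul_assoc, mul_one_div_cancel hπ.ne', one_mul]

lemma disc_submean (f : ℂ → ℝ) (s : Set ℂ) (hf : SubmeanOn f s)
    (c : ℂ) (R : ℝ) (hR : 0 < R) (hsub : Metric.closedBall c R ⊆ s) :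
    π * R ^ 2 * f c ≤ ∫ z in Metric.ball c R, f z := by
  -- the integrand in polar coordinates
  set h : ℝ × ℝ → ℝ := fun p => p.1 * f (c + p.1 * (Real.cos p.2 + Real.sin p.2 * Complex.I))
    with hh
  have hcont : ContinuousOn h (Set.Icc 0 R ×ˢ Set.Icc (-π) π) := by
    apply ContinuousOn.mul (continuousOn_fst)
    apply hf.1.comp
    · exact Continuous.continuousOn (by continuity)
    · intro p hp
      apply hsub
      simp only [Metric.mem_closedBall, Complex.dist_eq, add_sub_cancel_left]
      rw [norm_mul]
      have h1 : ‖(Real.cos p.2 : ℂ) + Real.sin p.2 * Complex.I‖ = 1 := by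
        rw [show ((Real.cos p.2 : ℂ) + Real.sin p.2 * Complex.I) = Complex.exp (p.2 * Complex.I) by
          rw [Complex.exp_mul_I]; push_cast; ring]
        simp [Complex.norm_exp]
      rw [h1, mul_one, Complex.norm_real, Real.norm_eq_abs, _root_.abs_of_nonneg hp.1.1]
      exact hp.1.2
  have hmeas_set : MeasurableSet (Set.Ioo (0:ℝ) R ×ˢ Set.Ioo (-π) π) :=
    measurableSet_Ioo.prod measurableSet_Ioo
  have hint : IntegrableOn h (Set.Ioo (0:ℝ) R ×ˢ Set.Ioo (-π) π)
      ((volume : Measure ℝ).prod volume) := by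
    rw [← MeasureTheory.Measure.volume_eq_prod]
    exact (hcont.integrableOn_compact (isCompact_Icc.prod isCompact_Icc)).mono_set
      (Set.prod_mono Set.Ioo_subset_Icc_self Set.Ioo_subset_Icc_self)
  -- step 1 : ball integral = polar integral
  have step1 : (∫ z in Metric.ball c R, f z)
      = ∫ p in Set.Ioo (0:ℝ) R ×ˢ Set.Ioo (-π) π, h p ∂((volume : Measure ℝ).prod volume) := by
    set g : ℂ → ℝ := (Metric.ball (0:ℂ) R).indicator (fun z => f (c + z)) with hg
    have e1 : (∫ z in Metric.ball c R, f z) = ∫ z in Metric.ball (0:ℂ) R, f (c + z) := by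
      have hmp : MeasurePreserving (fun z : ℂ => c + z) volume volume :=
        measurePreserving_add_left volume c
      have := hmp.setIntegral_preimage_emb
        (measurableEmbedding_addLeft c) f (Metric.ball c R)
      rw [← this]
      congr 1
      ext z
      simp [Complex.dist_eq, Metric.mem_ball]
    have e2 : (∫ z in Metric.ball (0:ℂ) R, f (c + z)) = ∫ z, g z := by
      rw [hg, MeasureTheory.integral_indicator Metric.isOpen_ball.measurableSet]
    have e3 : (∫ z, g z) = ∫ p in Complex.polarCoord.target, p.1 • g (Complex.polarCoord.symm p) :=
      (Complex.integral_comp_polarCoord_symm g).symm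
    have e4 : (∫ p in Complex.polarCoord.target, p.1 • g (Complex.polarCoord.symm p))
        = ∫ p in Complex.polarCoord.target,
            (Set.Ioo (0:ℝ) R ×ˢ Set.Ioo (-π) π).indicator h p := by
      apply MeasureTheory.setIntegral_congr_fun
      · rw [Complex.polarCoord_target]
        exact measurableSet_Ioi.prod measurableSet_Ioo
      · intro p hp
        rw [Complex.polarCoord_target] at hp
        obtain ⟨hp1, hp2⟩ := hp
        have habs : ‖Complex.polarCoord.symm p‖ = p.1 := by
          rw [Complex.norm_polarCoord_symm, abs_of_pos hp1]
        show p.1 • g (Complex.polarCoord.symm p) = _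
        by_cases hlt : p.1 < R
        · rw [Set.indicator_of_mem
            (Set.mem_prod.2 ⟨Set.mem_Ioo.2 ⟨Set.mem_Ioi.1 hp1, hlt⟩, hp2⟩)]
          rw [hg]
          rw [Set.indicator_of_mem (by
            rw [Metric.mem_ball, Complex.dist_eq, sub_zero, habs]; exact hlt)]
          rw [Complex.polarCoord_symm_apply]
          rfl
        · rw [Set.indicator_of_notMem (by
            simp only [Set.mem_prod, Set.mem_Ioo, not_and]
            intro h1 _; exact absurd h1.2 hlt), hg,
            Set.indicator_of_notMem, smul_zero]
          rw [Metric.mem_ball, Complex.dist_eq, sub_zero, habs]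
          linarith
    have e5 : (∫ p in Complex.polarCoord.target,
          (Set.Ioo (0:ℝ) R ×ˢ Set.Ioo (-π) π).indicator h p)
        = ∫ p in Set.Ioo (0:ℝ) R ×ˢ Set.Ioo (-π) π, h p := by
      rw [MeasureTheory.setIntegral_indicator hmeas_set, Complex.polarCoord_target,
        Set.inter_eq_self_of_subset_right
        (Set.prod_mono (Set.Ioo_subset_Ioi_self : Set.Ioo (0:ℝ) R ⊆ Set.Ioi 0) (Set.Subset.refl (Set.Ioo (-π) π)))]
    rw [e1, e2, e3, e4, e5]
    rfl
  -- step 2 : Fubini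
  have step2 : (∫ p in Set.Ioo (0:ℝ) R ×ˢ Set.Ioo (-π) π, h p ∂((volume : Measure ℝ).prod volume))
      = ∫ r in Set.Ioo (0:ℝ) R, ∫ θ in Set.Ioo (-π) π, h (r, θ) :=
    MeasureTheory.setIntegral_prod h hint
  -- step 3 : estimate
  have key : ∀ r ∈ Set.Ioo (0:ℝ) R, 2 * π * f c * r ≤ ∫ θ in Set.Ioo (-π) π, h (r, θ) := by
    intro r hr
    have hr0 : 0 < r := hr.1
    have hsub' : Metric.closedBall c r ⊆ s :=
      (Metric.closedBall_subset_closedBall hr.2.le).trans hsub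
    have := circle_submean f s hf c r hr0 hsub'
    calc 2 * π * f c * r = r * (2 * π * f c) := by ring
      _ ≤ r * ∫ θ in Set.Ioo (-π) π, f (c + r * (Real.cos θ + Real.sin θ * Complex.I)) :=
          mul_le_mul_of_nonneg_left this hr0.le
      _ = ∫ θ in Set.Ioo (-π) π, h (r, θ) := by
          rw [hh, ← MeasureTheory.integral_const_mul]
  have hintF : IntegrableOn (fun r => ∫ θ in Set.Ioo (-π) π, h (r, θ)) (Set.Ioo (0:ℝ) R) := by
    have := hint
    rw [IntegrableOn, ← MeasureTheory.Measure.prod_restrict] at this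
    exact this.integral_prod_left
  have hintG : IntegrableOn (fun r : ℝ => 2 * π * f c * r) (Set.Ioo (0:ℝ) R) :=
    (((continuous_const.mul continuous_id).continuousOn).integrableOn_compact
      (isCompact_Icc (a := (0:ℝ)) (b := R))).mono_set Set.Ioo_subset_Icc_self
  have hval : (∫ r in Set.Ioo (0:ℝ) R, 2 * π * f c * r) = π * R ^ 2 * f c := by
    rw [← MeasureTheory.integral_Ioc_eq_integral_Ioo,
      ← intervalIntegral.integral_of_le hR.le]
    simp_rw [mul_comm (2 * π * f c)]
    rw [intervalIntegral.integral_mul_const, integral_id]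
    ring
  calc π * R ^ 2 * f c = ∫ r in Set.Ioo (0:ℝ) R, 2 * π * f c * r := hval.symm
    _ ≤ ∫ r in Set.Ioo (0:ℝ) R, ∫ θ in Set.Ioo (-π) π, h (r, θ) :=
        MeasureTheory.setIntegral_mono_on hintG hintF measurableSet_Ioo key
    _ = ∫ z in Metric.ball c R, f z := (step1.trans step2).symm

theorem subharmonic_mean_value_comparison :
    ∃ C : ℝ, 0 < C ∧
      ∀ (a : ℂ) (f : ℂ → ℝ) (s : Set ℂ), IsOpen s → Metric.closedBall a (1/2) ⊆ s →
        (∀ z ∈ s, 0 ≤ f z) → SubmeanOn f s →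
        (∫ z in Metric.ball a (1/4), f z) ≤
          C * ∫ z in Metric.ball a (1/2) \ Metric.ball a (1/4), f z := by
  refine ⟨4, by norm_num, ?_⟩
  intro a f s hs hb hpos hsub
  have hcb : Metric.closedBall a (1/4) ⊆ Metric.closedBall a (1/2) :=
    Metric.closedBall_subset_closedBall (by norm_num)
  have hcont : ContinuousOn f (Metric.closedBall a (1/2)) := hsub.1.mono hb
  have hfint : IntegrableOn f (Metric.closedBall a (1/2)) :=
    hcont.integrableOn_compact (isCompact_closedBall a _)
  -- maximum on the small closed ball
  obtain ⟨z0, hz0, hmax⟩ := (isCompact_closedBall a (1/4)).exists_isMaxOn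
    ⟨a, Metric.mem_closedBall_self (by norm_num)⟩ (hcont.mono hcb)
  set M := f z0 with hM
  have hM0 : 0 ≤ M := hpos z0 (hb (hcb hz0))
  set d := dist z0 a with hd
  have hd0 : 0 ≤ d := dist_nonneg
  have hd14 : d ≤ 1/4 := Metric.mem_closedBall.1 hz0
  set R : ℝ := 1/2 - d with hR
  have hRpos : (0:ℝ) < R := by rw [hR]; linarith
  have hR14 : (1:ℝ)/4 ≤ R := by rw [hR]; linarith
  -- inclusion facts
  have hball_sub : Metric.closedBall z0 R ⊆ Metric.closedBall a (1/2) := by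
    intro w hw
    rw [Metric.mem_closedBall] at hw ⊢
    calc dist w a ≤ dist w z0 + dist z0 a := dist_triangle _ _ _
      _ ≤ R + d := add_le_add hw le_rfl
      _ = 1/2 := by rw [hR]; ring
  have hball_sub' : Metric.ball z0 R ⊆ Metric.ball a (1/2) := by
    intro w hw
    rw [Metric.mem_ball] at hw ⊢
    calc dist w a ≤ dist w z0 + dist z0 a := dist_triangle _ _ _
      _ < R + d := by linarith
      _ = 1/2 := by rw [hR]; ring
  -- integrals
  set I2 : ℝ := ∫ z in Metric.ball a (1/2) \ Metric.ball a (1/4), f z with hI2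
  have hI2nn : 0 ≤ I2 := by
    apply MeasureTheory.setIntegral_nonneg
      (Metric.isOpen_ball.measurableSet.diff Metric.isOpen_ball.measurableSet)
    intro z hz
    exact hpos z (hb (Metric.ball_subset_closedBall hz.1))
  -- key measure bound on the overlap
  have overlap : ∀ w ∈ Metric.ball z0 R ∩ Metric.ball a (1/4),
      w ∈ Metric.closedBall ((z0 + a)/2) (Real.sqrt ((R^2 + (1/4)^2)/2 - d^2/4)) := by
    intro w hw
    obtain ⟨h1, h2⟩ := hw
    rw [Metric.mem_ball] at h1 h2
    rw [Metric.mem_closedBall]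
    have hkey : (dist w ((z0 + a)/2))^2 = ((dist w z0)^2 + (dist w a)^2)/2 - d^2/4 := by
      have e1 : w - (z0 + a)/2 = ((w - z0) + (w - a))/2 := by ring
      have e2 : z0 - a = (w - a) - (w - z0) := by ring
      rw [Complex.dist_eq, Complex.dist_eq, Complex.dist_eq, hd, Complex.dist_eq]
      simp only [← Complex.normSq_eq_norm_sq]
      rw [e1, e2, map_div₀ Complex.normSq]
      have h2 : Complex.normSq 2 = 4 := by
        simp [Complex.normSq_apply]; norm_num
      rw [h2]
      simp only [Complex.normSq_apply, Complex.add_re, Complex.add_im, Complex.sub_re,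
        Complex.sub_im]
      ring
    have hb2 : (dist w ((z0 + a)/2))^2 ≤ (R^2 + (1/4)^2)/2 - d^2/4 := by
      rw [hkey]
      have e3 : (dist w z0)^2 ≤ R^2 := pow_le_pow_left₀ dist_nonneg h1.le 2
      have e4 : (dist w a)^2 ≤ (1/4)^2 := pow_le_pow_left₀ dist_nonneg h2.le 2
      have e3' : (dist w z0)^2 ≤ R^2 := e3
      clear_value d R
      linarith [hkey, e3', e4]
    calc dist w ((z0 + a)/2) = Real.sqrt ((dist w ((z0 + a)/2))^2) :=
          (Real.sqrt_sq dist_nonneg).symm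
      _ ≤ _ := Real.sqrt_le_sqrt hb2
  -- volume of the overlap
  have hvol : (volume (Metric.ball z0 R ∩ Metric.ball a (1/4))).toReal ≤ 3/4 * (π * R^2) := by
    have hnn : (0:ℝ) ≤ (R^2 + (1/4)^2)/2 - d^2/4 := by nlinarith
    have h34 : (R^2 + (1/4)^2)/2 - d^2/4 ≤ 3/4 * R^2 := by nlinarith [sq_nonneg (d - 1/4)]
    calc (volume (Metric.ball z0 R ∩ Metric.ball a (1/4))).toReal
        ≤ (volume (Metric.closedBall ((z0 + a)/2)
            (Real.sqrt ((R^2 + (1/4)^2)/2 - d^2/4)))).toReal := by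
          apply ENNReal.toReal_mono
          · rw [Complex.volume_closedBall]
            exact ENNReal.mul_ne_top (ENNReal.pow_ne_top ENNReal.ofReal_ne_top)
              ENNReal.coe_ne_top
          · exact measure_mono fun w hw => overlap w hw
      _ = ((R^2 + (1/4)^2)/2 - d^2/4) * π := by
          rw [Complex.volume_closedBall]
          rw [ENNReal.toReal_mul, ← ENNReal.ofReal_pow (Real.sqrt_nonneg _),
            Real.sq_sqrt hnn, ENNReal.toReal_ofReal hnn]
          simp [ENNReal.coe_toReal, NNReal.coe_real_pi]
      _ ≤ 3/4 * (π * R^2) := by nlinarith [Real.pi_pos]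
  -- bound the integral over the big ball
  have hsplit : (∫ z in Metric.ball z0 R, f z)
      = (∫ z in Metric.ball z0 R ∩ Metric.ball a (1/4), f z)
        + ∫ z in Metric.ball z0 R \ Metric.ball a (1/4), f z := by
    rw [MeasureTheory.integral_inter_add_diff Metric.isOpen_ball.measurableSet
      (hfint.mono_set ((Metric.ball_subset_closedBall).trans hball_sub))]
  have hpart1 : (∫ z in Metric.ball z0 R ∩ Metric.ball a (1/4), f z)
      ≤ M * (3/4 * (π * R^2)) := by
    calc (∫ z in Metric.ball z0 R ∩ Metric.ball a (1/4), f z)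
        ≤ ∫ _z in Metric.ball z0 R ∩ Metric.ball a (1/4), M := by
          apply MeasureTheory.setIntegral_mono_on
          · exact hfint.mono_set (((Set.inter_subset_left).trans
              Metric.ball_subset_closedBall).trans hball_sub)
          · exact integrableOn_const ((measure_mono
              Set.inter_subset_right).trans_lt measure_ball_lt_top).ne
          · exact (Metric.isOpen_ball.inter Metric.isOpen_ball).measurableSet
          · intro w hw
            exact hmax (Metric.ball_subset_closedBall hw.2)
      _ = (volume (Metric.ball z0 R ∩ Metric.ball a (1/4))).toReal * M := by
          rw [MeasureTheory.setIntegral_const, smul_eq_mul, measureReal_def]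
      _ ≤ M * (3/4 * (π * R^2)) := by
          rw [mul_comm]
          exact mul_le_mul_of_nonneg_left hvol hM0
  have hpart2 : (∫ z in Metric.ball z0 R \ Metric.ball a (1/4), f z) ≤ I2 := by
    apply MeasureTheory.setIntegral_mono_set
    · exact hfint.mono_set ((Set.diff_subset.trans Metric.ball_subset_closedBall).trans
        (Metric.closedBall_subset_closedBall (by norm_num)))
    · apply MeasureTheory.ae_restrict_of_forall_mem
        (Metric.isOpen_ball.measurableSet.diff Metric.isOpen_ball.measurableSet)
      intro z hz
      exact hpos z (hb (Metric.ball_subset_closedBall hz.1))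
    · exact HasSubset.Subset.eventuallyLE
        (fun w hw => ⟨hball_sub' hw.1, hw.2⟩)
  -- apply submean at z0
  have hdisc := disc_submean f s hsub z0 R hRpos (hball_sub.trans hb)
  have hMI2 : π * R^2 * M ≤ 3/4 * (π * R^2) * M + I2 := by
    calc π * R^2 * M ≤ ∫ z in Metric.ball z0 R, f z := hdisc
      _ = _ + _ := hsplit
      _ ≤ M * (3/4 * (π * R^2)) + I2 := add_le_add hpart1 hpart2
      _ = 3/4 * (π * R^2) * M + I2 := by ring
  -- conclude : π R²/4 * M ≤ I2, with R² ≥ 1/16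
  have hMle : π / 64 * M ≤ I2 := by
    have h1 : π * R^2 / 4 * M ≤ I2 := by linarith
    have h2 : (1:ℝ)/16 ≤ R^2 := by nlinarith
    nlinarith [Real.pi_pos]
  -- final bound on the inner integral
  have hI1 : (∫ z in Metric.ball a (1/4), f z) ≤ π / 16 * M := by
    calc (∫ z in Metric.ball a (1/4), f z)
        ≤ ∫ _z in Metric.ball a (1/4), M := by
          apply MeasureTheory.setIntegral_mono_on
          · exact hfint.mono_set (Metric.ball_subset_closedBall.trans hcb)
          · exact integrableOn_const measure_ball_lt_top.ne
          · exact Metric.isOpen_ball.measurableSet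
          · intro w hw
            exact hmax (Metric.ball_subset_closedBall hw)
      _ = (volume (Metric.ball a (1/4))).toReal * M := by
          rw [MeasureTheory.setIntegral_const, smul_eq_mul, measureReal_def]
      _ = π / 16 * M := by
          have hvb : (volume (Metric.ball a (1/4))).toReal = π / 16 := by
            rw [Complex.volume_ball, ENNReal.toReal_mul, ← ENNReal.ofReal_pow (by norm_num),
              ENNReal.toReal_ofReal (by norm_num), ENNReal.coe_toReal, NNReal.coe_real_pi]
            norm_num
            ring
          rw [hvb]
  calc (∫ z in Metric.ball a (1/4), f z) ≤ π / 16 * M := hI1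
    _ ≤ 4 * I2 := by linarith
    _ = 4 * _ := rfl
end
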